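/- arXiv:1912.04725 — 3 statements merged into one kernel-verified Lean document; each statement's English description precedes it below -/
import Mathlib

section
/- For every admissible subset A of C^{2,3} there exists a compatible total order on A ∩ T, where T is the set of transpositions. -/
namespace SmoothPerm

variable {n : ℕ}

/-- Bruhat order on `S_n`, via the standard counting criterion. -/
def bruhatLE (τ σ : Equiv.Perm (Fin n)) : Prop :=
  ∀ i j : Fin n,
    (Finset.univ.filter (fun x => x ≤ i ∧ σ x ≤ j)).card ≤
      (Finset.univ.filter (fun x => x ≤ i ∧ τ x ≤ j)).card

/-- Number of inversions (the length ℓ(σ)). -/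
def invNum (σ : Equiv.Perm (Fin n)) : ℕ :=
  (Finset.univ.filter (fun p : Fin n × Fin n => p.1 < p.2 ∧ σ p.2 < σ p.1)).card

def isTransposition (τ : Equiv.Perm (Fin n)) : Prop :=
  ∃ i j : Fin n, i < j ∧ τ = Equiv.swap i j

/-- σ is smooth iff ℓ(σ) equals the number of transpositions Bruhat-below σ. -/
def smooth (σ : Equiv.Perm (Fin n)) : Prop :=
  invNum σ = Nat.card {τ : Equiv.Perm (Fin n) // isTransposition τ ∧ bruhatLE τ σ}

def avoids4231 (σ : Equiv.Perm (Fin n)) : Prop :=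
  ¬ ∃ a b c d : Fin n, a < b ∧ b < c ∧ c < d ∧ σ d < σ b ∧ σ b < σ c ∧ σ c < σ a

/-- covexillary = 3412-avoiding. -/
def covexillary (σ : Equiv.Perm (Fin n)) : Prop :=
  ¬ ∃ a b c d : Fin n, a < b ∧ b < c ∧ c < d ∧ σ c < σ d ∧ σ d < σ a ∧ σ a < σ b

def avoids321 (σ : Equiv.Perm (Fin n)) : Prop :=
  ¬ ∃ a b c : Fin n, a < b ∧ b < c ∧ σ c < σ b ∧ σ b < σ a

/-- The 3-cycle i ↦ j ↦ k ↦ i. -/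
def Rc (i j k : Fin n) : Equiv.Perm (Fin n) := Equiv.swap i k * Equiv.swap i j

def Lc (i j k : Fin n) : Equiv.Perm (Fin n) := (Rc i j k)⁻¹

def inC23 (τ : Equiv.Perm (Fin n)) : Prop :=
  isTransposition τ ∨ ∃ i j k : Fin n, i < j ∧ j < k ∧ (τ = Rc i j k ∨ τ = Lc i j k)

/-- The 2-3-table of σ. -/
def Ctab (σ : Equiv.Perm (Fin n)) : Set (Equiv.Perm (Fin n)) :=
  {τ | inC23 τ ∧ bruhatLE τ σ}

def admissible (A : Set (Equiv.Perm (Fin n))) : Prop :=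
  (∀ τ ∈ A, inC23 τ) ∧
  (∀ σ ∈ A, ∀ τ : Equiv.Perm (Fin n), inC23 τ → bruhatLE τ σ → τ ∈ A) ∧
  (∀ i j k l : Fin n, i < j → j < l → i < k → k < l →
    Rc i j l ∈ A → Lc i k l ∈ A → Equiv.swap i l ∈ A) ∧
  (∀ i j k : Fin n, i < j → j < k →
    Equiv.swap i j ∈ A → Equiv.swap j k ∈ A → (Rc i j k ∈ A ∨ Lc i j k ∈ A))

def isWedge (A : Set (Equiv.Perm (Fin n))) (i j : Fin n) : Prop :=
  i < j ∧ Equiv.swap i j ∈ A ∧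
  (∀ i' : Fin n, (i' : ℕ) + 1 = (i : ℕ) → Equiv.swap i' i ∉ A) ∧
  (∀ j' : Fin n, (j : ℕ) + 1 = (j' : ℕ) → Rc i j j' ∉ A)

def derivedSet (A : Set (Equiv.Perm (Fin n))) (i j : Fin n) : Set (Equiv.Perm (Fin n)) :=
  A \ ({Equiv.swap i j} ∪ {τ | ∃ k, j < k ∧ τ = Lc i j k} ∪
       {τ | ∃ k, i < k ∧ k < j ∧ τ = Rc i k j})

def strictTotalOn (S : Set (Equiv.Perm (Fin n)))
    (r : Equiv.Perm (Fin n) → Equiv.Perm (Fin n) → Prop) : Prop :=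
  (∀ x ∈ S, ¬ r x x) ∧
  (∀ x ∈ S, ∀ y ∈ S, ∀ z ∈ S, r x y → r y z → r x z) ∧
  (∀ x ∈ S, ∀ y ∈ S, x ≠ y → r x y ∨ r y x)

def compatibleOrder (A : Set (Equiv.Perm (Fin n)))
    (r : Equiv.Perm (Fin n) → Equiv.Perm (Fin n) → Prop) : Prop :=
  (∀ i j k : Fin n, i < j → j < k → Rc i j k ∈ A → Lc i j k ∉ A →
    r (Equiv.swap i j) (Equiv.swap j k)) ∧
  (∀ i j k : Fin n, i < j → j < k → Lc i j k ∈ A → Rc i j k ∉ A →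
    r (Equiv.swap j k) (Equiv.swap i j)) ∧
  (∀ i j k : Fin n, i < j → j < k → Equiv.swap i k ∈ A →
    ((r (Equiv.swap i j) (Equiv.swap i k) ∧ r (Equiv.swap i k) (Equiv.swap j k)) ∨
     (r (Equiv.swap j k) (Equiv.swap i k) ∧ r (Equiv.swap i k) (Equiv.swap i j))))

def coversIn (S : Set (Equiv.Perm (Fin n)))
    (r : Equiv.Perm (Fin n) → Equiv.Perm (Fin n) → Prop)
    (x y : Equiv.Perm (Fin n)) : Prop :=
  x ∈ S ∧ y ∈ S ∧ r x y ∧ ∀ z ∈ S, ¬ (r x z ∧ r z y)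

/-- m_σ(i) = max σ([i]). -/
def maxS (σ : Equiv.Perm (Fin n)) (i : Fin n) : Fin n :=
  ((Finset.univ.filter (fun x => x ≤ i)).image (fun x => σ x)).max'
    ⟨σ i, Finset.mem_image_of_mem _ (by simp)⟩

/-- The cyclic shift i → i+1 → ⋯ → j → i. -/
def Rseg (i j : Fin n) : Equiv.Perm (Fin n) :=
  ((List.finRange n).filter (fun x => decide (i ≤ x ∧ x ≤ j))).formPerm

def definedByInclusions (σ : Equiv.Perm (Fin n)) : Prop :=
  ∀ τ : Equiv.Perm (Fin n),
    (∀ x, maxS τ x ≤ maxS σ x) → (∀ x, maxS τ⁻¹ x ≤ maxS σ⁻¹ x) → bruhatLE τ σ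

section Bruhat
variable {n : ℕ}

lemma bruhat_refl (σ : Equiv.Perm (Fin n)) : bruhatLE σ σ := fun _ _ => le_rfl

lemma bruhat_trans {τ σ ρ : Equiv.Perm (Fin n)} (h1 : bruhatLE τ σ) (h2 : bruhatLE σ ρ) :
    bruhatLE τ ρ := fun i j => (h2 i j).trans (h1 i j)

lemma card_filter_inv (σ : Equiv.Perm (Fin n)) (i j : Fin n) :
    (Finset.univ.filter (fun x => x ≤ i ∧ σ⁻¹ x ≤ j)).card =
      (Finset.univ.filter (fun x => x ≤ j ∧ σ x ≤ i)).card := by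
  apply Finset.card_bij (fun x _ => σ⁻¹ x)
  · intro a ha
    simp only [Finset.mem_filter, Finset.mem_univ, true_and] at ha ⊢
    exact ⟨ha.2, by simpa using ha.1⟩
  · intro a ha b hb hab
    exact (Equiv.injective _ hab)
  · intro b hb
    simp only [Finset.mem_filter, Finset.mem_univ, true_and] at hb
    exact ⟨σ b, by simp [hb.1, hb.2], by simp⟩

lemma bruhat_inv {τ σ : Equiv.Perm (Fin n)} (h : bruhatLE τ σ) : bruhatLE τ⁻¹ σ⁻¹ := by
  intro i j
  rw [card_filter_inv, card_filter_inv]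
  exact h j i

lemma bruhat_mul_swap_right (σ : Equiv.Perm (Fin n)) {c d : Fin n} (hcd : c < d)
    (h : σ c < σ d) : bruhatLE σ (σ * Equiv.swap c d) := by
  intro i j
  have hre : ∀ x : Fin n, (σ * Equiv.swap c d) x = σ (Equiv.swap c d x) := fun x => rfl
  simp only [hre]
  rw [Finset.card_filter, Finset.card_filter]
  rw [show (∑ x : Fin n, if x ≤ i ∧ σ (Equiv.swap c d x) ≤ j then 1 else 0) =
      ∑ x : Fin n, if (Equiv.swap c d x) ≤ i ∧ σ x ≤ j then 1 else 0 from by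
    rw [← Equiv.sum_comp (Equiv.swap c d) (fun x => if (Equiv.swap c d x) ≤ i ∧ σ x ≤ j then 1 else 0)]
    refine Finset.sum_congr rfl (fun x _ => ?_)
    rw [Equiv.swap_apply_self]]
  have hsub : ({c, d} : Finset (Fin n)) ⊆ Finset.univ := Finset.subset_univ _
  rw [← Finset.sum_sdiff hsub, ← Finset.sum_sdiff (f := fun x => if x ≤ i ∧ σ x ≤ j then 1 else 0) hsub]
  have heq : ∀ x ∈ Finset.univ \ ({c, d} : Finset (Fin n)),
      (if (Equiv.swap c d x) ≤ i ∧ σ x ≤ j then 1 else 0) = if x ≤ i ∧ σ x ≤ j then 1 else 0 := by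
    intro x hx
    simp only [Finset.mem_sdiff, Finset.mem_insert, Finset.mem_singleton] at hx
    rw [Equiv.swap_apply_of_ne_of_ne (by tauto) (by tauto)]
  rw [Finset.sum_congr rfl heq]
  have hne : c ≠ d := hcd.ne
  rw [Finset.sum_pair hne, Finset.sum_pair hne, Equiv.swap_apply_left, Equiv.swap_apply_right]
  have h1 : d ≤ i → c ≤ i := fun h' => hcd.le.trans h'
  have h2 : σ d ≤ j → σ c ≤ j := fun h' => h.le.trans h'
  refine Nat.add_le_add_left ?_ _
  split_ifs <;> first | omega | (exfalso; tauto)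

lemma bruhat_mul_swap_left (σ : Equiv.Perm (Fin n)) {c d : Fin n} (hcd : c < d)
    (h : σ⁻¹ c < σ⁻¹ d) : bruhatLE σ (Equiv.swap c d * σ) := by
  have h1 : bruhatLE σ⁻¹ (σ⁻¹ * Equiv.swap c d) := bruhat_mul_swap_right σ⁻¹ hcd h
  have h2 := bruhat_inv h1
  simpa [mul_inv_rev, Equiv.swap_inv] using h2

end Bruhat
section Identities
variable {n : ℕ}

lemma Rc_apply_a {i j k : Fin n} (hij : i < j) (hjk : j < k) : Rc i j k i = j := by
  have h1 : i ≠ k := (hij.trans hjk).ne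
  have h2 : j ≠ i := hij.ne'
  have h3 : j ≠ k := hjk.ne
  simp [Rc, Equiv.Perm.mul_apply, Equiv.swap_apply_of_ne_of_ne h2 h3]

lemma Rc_apply_b {i j k : Fin n} (hij : i < j) (hjk : j < k) : Rc i j k j = k := by
  have h2 : j ≠ i := hij.ne'
  have h3 : j ≠ k := hjk.ne
  simp [Rc, Equiv.Perm.mul_apply, Equiv.swap_apply_of_ne_of_ne h2 h3]

lemma Rc_apply_c {i j k : Fin n} (hij : i < j) (hjk : j < k) : Rc i j k k = i := by
  have h1 : k ≠ i := (hij.trans hjk).ne'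
  have h2 : k ≠ j := hjk.ne'
  simp [Rc, Equiv.Perm.mul_apply, Equiv.swap_apply_of_ne_of_ne h1 h2]

lemma Rc_apply_other {i j k x : Fin n} (h1 : x ≠ i) (h2 : x ≠ j) (h3 : x ≠ k) :
    Rc i j k x = x := by
  simp [Rc, Equiv.Perm.mul_apply, Equiv.swap_apply_of_ne_of_ne h1 h2,
    Equiv.swap_apply_of_ne_of_ne h1 h3]

lemma Lc_eq (i j k : Fin n) : Lc i j k = Equiv.swap i j * Equiv.swap i k := by
  simp [Lc, Rc, mul_inv_rev]

lemma Lc_apply_a {i j k : Fin n} (hij : i < j) (hjk : j < k) : Lc i j k i = k := by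
  have h1 : i ≠ j := hij.ne
  have h2 : i ≠ k := (hij.trans hjk).ne
  rw [Lc_eq]
  simp [Equiv.Perm.mul_apply, Equiv.swap_apply_of_ne_of_ne h2.symm hjk.ne']

lemma Lc_apply_b {i j k : Fin n} (hij : i < j) (hjk : j < k) : Lc i j k j = i := by
  rw [Lc_eq]
  simp [Equiv.Perm.mul_apply, Equiv.swap_apply_of_ne_of_ne hij.ne' hjk.ne]

lemma Lc_apply_c {i j k : Fin n} (hij : i < j) (hjk : j < k) : Lc i j k k = j := by
  rw [Lc_eq]
  simp [Equiv.Perm.mul_apply]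

lemma Lc_apply_other {i j k x : Fin n} (h1 : x ≠ i) (h2 : x ≠ j) (h3 : x ≠ k) :
    Lc i j k x = x := by
  rw [Lc_eq]
  simp [Equiv.Perm.mul_apply, Equiv.swap_apply_of_ne_of_ne h1 h3,
    Equiv.swap_apply_of_ne_of_ne h1 h2]

/-- case-bash helper -/
lemma perm_eq_of_agree {σ τ : Equiv.Perm (Fin n)} (h : ∀ x, σ x = τ x) : σ = τ :=
  Equiv.ext h

lemma I1 {i j k : Fin n} (hij : i < j) (hjk : j < k) :
    Rc i j k = Equiv.swap i j * Equiv.swap j k := by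
  have hik := hij.trans hjk
  apply perm_eq_of_agree
  intro x
  rcases eq_or_ne x i with rfl | hxi
  · rw [Rc_apply_a hij hjk]
    simp [Equiv.Perm.mul_apply, Equiv.swap_apply_of_ne_of_ne hij.ne hik.ne]
  rcases eq_or_ne x j with rfl | hxj
  · rw [Rc_apply_b hij hjk]
    simp [Equiv.Perm.mul_apply, Equiv.swap_apply_of_ne_of_ne hik.ne' hjk.ne']
  rcases eq_or_ne x k with rfl | hxk
  · rw [Rc_apply_c hij hjk]
    simp [Equiv.Perm.mul_apply]
  · rw [Rc_apply_other hxi hxj hxk]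
    simp [Equiv.Perm.mul_apply, Equiv.swap_apply_of_ne_of_ne hxj hxk,
      Equiv.swap_apply_of_ne_of_ne hxi hxj]

lemma I3 {i j k : Fin n} (hij : i < j) (hjk : j < k) :
    Lc i j k = Equiv.swap i k * Equiv.swap j k := by
  have hik := hij.trans hjk
  apply perm_eq_of_agree
  intro x
  rcases eq_or_ne x i with rfl | hxi
  · rw [Lc_apply_a hij hjk]
    simp [Equiv.Perm.mul_apply, Equiv.swap_apply_of_ne_of_ne hij.ne hik.ne]
  rcases eq_or_ne x j with rfl | hxj
  · rw [Lc_apply_b hij hjk]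
    simp [Equiv.Perm.mul_apply]
  rcases eq_or_ne x k with rfl | hxk
  · rw [Lc_apply_c hij hjk]
    simp [Equiv.Perm.mul_apply, Equiv.swap_apply_of_ne_of_ne hij.ne' hjk.ne]
  · rw [Lc_apply_other hxi hxj hxk]
    simp [Equiv.Perm.mul_apply, Equiv.swap_apply_of_ne_of_ne hxj hxk,
      Equiv.swap_apply_of_ne_of_ne hxi hxk]

lemma I4 {i m j : Fin n} (him : i < m) (hmj : m < j) :
    Rc i m j * Equiv.swap i m = Equiv.swap i j := by
  have hij := him.trans hmj
  apply perm_eq_of_agree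
  intro x
  rcases eq_or_ne x i with rfl | hxi
  · simp [Equiv.Perm.mul_apply, Rc_apply_b him hmj]
  rcases eq_or_ne x m with rfl | hxm
  · rw [Equiv.Perm.mul_apply, Equiv.swap_apply_right, Rc_apply_a him hmj,
      Equiv.swap_apply_of_ne_of_ne him.ne' hmj.ne]
  rcases eq_or_ne x j with rfl | hxj
  · rw [Equiv.Perm.mul_apply, Equiv.swap_apply_of_ne_of_ne hij.ne' hmj.ne',
      Rc_apply_c him hmj, Equiv.swap_apply_right]
  · rw [Equiv.Perm.mul_apply, Equiv.swap_apply_of_ne_of_ne hxi hxm,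
      Rc_apply_other hxi hxm hxj, Equiv.swap_apply_of_ne_of_ne hxi hxj]

lemma I5 {i m j : Fin n} (him : i < m) (hmj : m < j) :
    Lc i m j * Equiv.swap m j = Equiv.swap i j := by
  have hij := him.trans hmj
  apply perm_eq_of_agree
  intro x
  rcases eq_or_ne x i with rfl | hxi
  · rw [Equiv.Perm.mul_apply, Equiv.swap_apply_of_ne_of_ne him.ne hij.ne,
      Lc_apply_a him hmj, Equiv.swap_apply_left]
  rcases eq_or_ne x m with rfl | hxm
  · rw [Equiv.Perm.mul_apply, Equiv.swap_apply_left, Lc_apply_c him hmj,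
      Equiv.swap_apply_of_ne_of_ne him.ne' hmj.ne]
  rcases eq_or_ne x j with rfl | hxj
  · rw [Equiv.Perm.mul_apply, Equiv.swap_apply_right, Lc_apply_b him hmj,
      Equiv.swap_apply_right]
  · rw [Equiv.Perm.mul_apply, Equiv.swap_apply_of_ne_of_ne hxm hxj,
      Lc_apply_other hxi hxm hxj, Equiv.swap_apply_of_ne_of_ne hxi hxj]

lemma I6 {i d j l : Fin n} (hid : i < d) (hdj : d < j) (hjl : j < l) :
    Equiv.swap i d * (Rc d j l * Equiv.swap i d) = Rc i j l := by
  have hij := hid.trans hdj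
  have hil := hij.trans hjl
  have hdl := hdj.trans hjl
  apply perm_eq_of_agree
  intro x
  rcases eq_or_ne x i with rfl | hxi
  · rw [Equiv.Perm.mul_apply, Equiv.Perm.mul_apply, Equiv.swap_apply_left,
      Rc_apply_a hdj hjl, Equiv.swap_apply_of_ne_of_ne hij.ne' hdj.ne', Rc_apply_a hij hjl]
  rcases eq_or_ne x d with rfl | hxd
  · rw [Equiv.Perm.mul_apply, Equiv.Perm.mul_apply, Equiv.swap_apply_right,
      Rc_apply_other hid.ne hij.ne hil.ne, Equiv.swap_apply_left,
      Rc_apply_other hid.ne' hdj.ne hdl.ne]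
  rcases eq_or_ne x j with rfl | hxj
  · rw [Equiv.Perm.mul_apply, Equiv.Perm.mul_apply,
      Equiv.swap_apply_of_ne_of_ne hij.ne' hdj.ne', Rc_apply_b hdj hjl,
      Equiv.swap_apply_of_ne_of_ne hil.ne' hdl.ne', Rc_apply_b hij hjl]
  rcases eq_or_ne x l with rfl | hxl
  · rw [Equiv.Perm.mul_apply, Equiv.Perm.mul_apply,
      Equiv.swap_apply_of_ne_of_ne hil.ne' hdl.ne', Rc_apply_c hdj hjl,
      Equiv.swap_apply_right, Rc_apply_c hij hjl]
  · rw [Equiv.Perm.mul_apply, Equiv.Perm.mul_apply,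
      Equiv.swap_apply_of_ne_of_ne hxi hxd, Rc_apply_other hxd hxj hxl,
      Equiv.swap_apply_of_ne_of_ne hxi hxd, Rc_apply_other hxi hxj hxl]

end Identities

section Facts
variable {n : ℕ}

lemma F2a {i j k : Fin n} (hij : i < j) (hjk : j < k) :
    bruhatLE (Equiv.swap i j) (Rc i j k) := by
  have h := bruhat_mul_swap_left (Equiv.swap i j) (c := i) (d := k) (hij.trans hjk) (by
    simp [Equiv.swap_inv, Equiv.swap_apply_left, Equiv.swap_apply_of_ne_of_ne
      (hij.trans hjk).ne' hjk.ne']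
    exact hjk)
  exact h

lemma F2b {i j k : Fin n} (hij : i < j) (hjk : j < k) :
    bruhatLE (Equiv.swap j k) (Rc i j k) := by
  rw [I1 hij hjk]
  exact bruhat_mul_swap_left (Equiv.swap j k) hij (by
    rw [Equiv.swap_inv, Equiv.swap_apply_of_ne_of_ne hij.ne (hij.trans hjk).ne,
      Equiv.swap_apply_left]
    exact hij.trans hjk)

lemma F2c {i j k : Fin n} (hij : i < j) (hjk : j < k) :
    bruhatLE (Equiv.swap i j) (Lc i j k) := by
  rw [Lc_eq]
  exact bruhat_mul_swap_right (Equiv.swap i j) (hij.trans hjk) (by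
    rw [Equiv.swap_apply_left, Equiv.swap_apply_of_ne_of_ne (hij.trans hjk).ne' hjk.ne']
    exact hjk)

lemma F2d {i j k : Fin n} (hij : i < j) (hjk : j < k) :
    bruhatLE (Equiv.swap j k) (Lc i j k) := by
  rw [I3 hij hjk]
  exact bruhat_mul_swap_left (Equiv.swap j k) (hij.trans hjk) (by
    rw [Equiv.swap_inv, Equiv.swap_apply_of_ne_of_ne hij.ne (hij.trans hjk).ne,
      Equiv.swap_apply_right]
    exact hij)

lemma F3a {i m j : Fin n} (him : i < m) (hmj : m < j) :
    bruhatLE (Rc i m j) (Equiv.swap i j) := by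
  have h := bruhat_mul_swap_right (Rc i m j) him (by
    rw [Rc_apply_a him hmj, Rc_apply_b him hmj]; exact hmj)
  rwa [I4 him hmj] at h

lemma F3b {i m j : Fin n} (him : i < m) (hmj : m < j) :
    bruhatLE (Lc i m j) (Equiv.swap i j) := by
  have h := bruhat_mul_swap_right (Lc i m j) hmj (by
    rw [Lc_apply_b him hmj, Lc_apply_c him hmj]; exact him)
  rwa [I5 him hmj] at h

lemma F4R {i d j l : Fin n} (hid : i ≤ d) (hdj : d < j) (hjl : j < l) :
    bruhatLE (Rc d j l) (Rc i j l) := by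
  rcases eq_or_lt_of_le hid with rfl | hid
  · exact bruhat_refl _
  have hij' : i < j := hid.trans hdj
  have hil : i < l := hij'.trans hjl
  have hRi : Rc d j l i = i := Rc_apply_other hid.ne hij'.ne hil.ne
  have step1 : bruhatLE (Rc d j l) (Rc d j l * Equiv.swap i d) := by
    apply bruhat_mul_swap_right _ hid
    rw [hRi, Rc_apply_a hdj hjl]
    exact hij'
  have step2 : bruhatLE (Rc d j l * Equiv.swap i d)
      (Equiv.swap i d * (Rc d j l * Equiv.swap i d)) := by
    apply bruhat_mul_swap_left _ hid
    have e1 : (Rc d j l * Equiv.swap i d)⁻¹ i = d := by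
      rw [Equiv.Perm.inv_eq_iff_eq, Equiv.Perm.mul_apply, Equiv.swap_apply_right, hRi]
    have e2 : (Rc d j l * Equiv.swap i d)⁻¹ d = l := by
      rw [Equiv.Perm.inv_eq_iff_eq, Equiv.Perm.mul_apply,
        Equiv.swap_apply_of_ne_of_ne hil.ne' (hdj.trans hjl).ne', Rc_apply_c hdj hjl]
    rw [e1, e2]
    exact hdj.trans hjl
  have := bruhat_trans step1 step2
  rwa [I6 hid hdj hjl] at this

lemma bruhat_trans' {τ σ ρ : Equiv.Perm (Fin n)} (h1 : bruhatLE τ σ) (h2 : bruhatLE σ ρ) :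
    bruhatLE τ ρ := bruhat_trans h1 h2

lemma F4L {i d j l : Fin n} (hid : i ≤ d) (hdj : d < j) (hjl : j < l) :
    bruhatLE (Lc d j l) (Lc i j l) := bruhat_inv (F4R hid hdj hjl)

lemma F1 {i a b l : Fin n} (hia : i ≤ a) (hab : a < b) (hbl : b ≤ l) :
    bruhatLE (Equiv.swap a b) (Equiv.swap i l) := by
  have s1 : bruhatLE (Equiv.swap a b) (Equiv.swap a l) := by
    rcases eq_or_lt_of_le hbl with rfl | hbl
    · exact bruhat_refl _
    · exact bruhat_trans (F2a hab hbl) (F3a hab hbl)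
  have s2 : bruhatLE (Equiv.swap a l) (Equiv.swap i l) := by
    rcases eq_or_lt_of_le hia with rfl | hia
    · exact bruhat_refl _
    · exact bruhat_trans (F2d hia (hab.trans_le hbl)) (F3b hia (hab.trans_le hbl))
  exact bruhat_trans s1 s2

end Facts
section Star
variable {n : ℕ}

lemma inC23_swap {a b : Fin n} (hab : a < b) : inC23 (Equiv.swap a b) :=
  Or.inl ⟨a, b, hab, rfl⟩

lemma inC23_Rc {i j k : Fin n} (hij : i < j) (hjk : j < k) : inC23 (Rc i j k) :=
  Or.inr ⟨i, j, k, hij, hjk, Or.inl rfl⟩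

lemma inC23_Lc {i j k : Fin n} (hij : i < j) (hjk : j < k) : inC23 (Lc i j k) :=
  Or.inr ⟨i, j, k, hij, hjk, Or.inr rfl⟩

/-- ★ : it is impossible that `k` admits both an "R-forced gap" and an "L-forced gap". -/
lemma star {A : Set (Equiv.Perm (Fin n))} (hA : admissible A)
    {i j i' j' k : Fin n} (hij : i < j) (hjk : j < k) (hij' : i' < j') (hj'k : j' < k)
    (hR : Rc i' j' k ∈ A) (hnR : Equiv.swap i' k ∉ A)
    (hL : Lc i j k ∈ A) (hnL : Equiv.swap i k ∉ A) : False := by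
  obtain ⟨hC, hClose, hCond3, hCond4⟩ := hA
  rcases lt_trichotomy i i' with hii' | rfl | hi'i
  · -- i < i'
    rcases lt_or_ge i' j with hi'j | hji'
    · -- i' < j : lower the L-cycle to bottom i'
      have hLc' : Lc i' j k ∈ A := hClose _ hL _ (inC23_Lc hi'j hjk) (F4L hii'.le hi'j hjk)
      exact hnR (hCond3 i' j' j k hij' hj'k hi'j hjk hR hLc')
    · -- j ≤ i' : swap j k ∈ A contains swap i' k
      have hjk' : Equiv.swap j k ∈ A := hClose _ hL _ (inC23_swap hjk) (F2d hij hjk)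
      have hi'k : i' < k := hij'.trans hj'k
      exact hnR (hClose _ hjk' _ (inC23_swap hi'k) (F1 hji' hi'k (le_refl k)))
  · -- i = i'
    exact hnR (hCond3 i j' j k hij' hj'k hij hjk hR hL)
  · -- i' < i
    rcases lt_or_ge i j' with hij'' | hj'i
    · -- i < j' : lower the R-cycle to bottom i
      have hRc' : Rc i j' k ∈ A := hClose _ hR _ (inC23_Rc hij'' hj'k) (F4R hi'i.le hij'' hj'k)
      exact hnL (hCond3 i j' j k hij'' hj'k hij hjk hRc' hL)
    · -- j' ≤ i : swap j' k ∈ A contains swap i k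
      have hj'k' : Equiv.swap j' k ∈ A := hClose _ hR _ (inC23_swap hj'k) (F2b hij' hj'k)
      have hik : i < k := hij.trans hjk
      exact hnL (hClose _ hj'k' _ (inC23_swap hik) (F1 hj'i hik (le_refl k)))

end Star
section Keys
variable {n : ℕ}

open Classical in
/-- ε(k) = 1 iff k is the top of an "R-forced gap". -/
noncomputable def eps (A : Set (Equiv.Perm (Fin n))) (k : Fin n) : ℚ :=
  if ∃ i j : Fin n, i < j ∧ j < k ∧ Rc i j k ∈ A ∧ Equiv.swap i k ∉ A then 1 else -1

noncomputable def yy (A : Set (Equiv.Perm (Fin n))) (k : Fin n) : ℚ :=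
  eps A k * (2 * (n : ℚ) + 2) ^ (k : ℕ)

noncomputable def key (A : Set (Equiv.Perm (Fin n))) (a b : Fin n) : ℚ :=
  (yy A b - yy A a) / (((b : ℕ) : ℚ) - ((a : ℕ) : ℚ))

lemma eps_one {A : Set (Equiv.Perm (Fin n))} {k : Fin n}
    (h : ∃ i j : Fin n, i < j ∧ j < k ∧ Rc i j k ∈ A ∧ Equiv.swap i k ∉ A) :
    eps A k = 1 := by
  unfold eps
  split <;> [rfl; exact absurd h (by assumption)]

lemma eps_negone {A : Set (Equiv.Perm (Fin n))} {k : Fin n}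
    (h : ¬ ∃ i j : Fin n, i < j ∧ j < k ∧ Rc i j k ∈ A ∧ Equiv.swap i k ∉ A) :
    eps A k = -1 := by
  unfold eps
  split <;> [exact absurd (by assumption) h; rfl]

lemma abs_eps (A : Set (Equiv.Perm (Fin n))) (k : Fin n) : |eps A k| ≤ 1 := by
  unfold eps
  split <;> norm_num

lemma abs_yy (A : Set (Equiv.Perm (Fin n))) (k : Fin n) :
    |yy A k| ≤ (2 * (n : ℚ) + 2) ^ (k : ℕ) := by
  have hM : (0:ℚ) ≤ 2 * (n : ℚ) + 2 := by positivity
  rw [yy, abs_mul, abs_pow, abs_of_nonneg hM]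
  calc |eps A k| * (2 * (n : ℚ) + 2) ^ (k : ℕ)
      ≤ 1 * (2 * (n : ℚ) + 2) ^ (k : ℕ) := by
        apply mul_le_mul_of_nonneg_right (abs_eps A k) (by positivity)
    _ = _ := one_mul _

/-- Core arithmetic inequalities. -/
lemma core {N i j k : ℕ} (hij : i < j) (hjk : j < k) (hk : k < N) {a b : ℚ}
    (ha : |a| ≤ (2 * (N:ℚ) + 2) ^ i) (hb : |b| ≤ (2 * (N:ℚ) + 2) ^ j) :
    (b - a) * ((k:ℚ) - (i:ℚ)) < ((2 * (N:ℚ) + 2) ^ k - a) * ((j:ℚ) - (i:ℚ)) ∧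
    ((2 * (N:ℚ) + 2) ^ k - a) * ((k:ℚ) - (j:ℚ)) <
      ((2 * (N:ℚ) + 2) ^ k - b) * ((k:ℚ) - (i:ℚ)) := by
  set M : ℚ := 2 * (N:ℚ) + 2 with hMdef
  have hM1 : (1:ℚ) ≤ M := by
    have : (0:ℚ) ≤ (N:ℚ) := Nat.cast_nonneg N
    simp only [hMdef]; linarith
  have hkN : ((k:ℚ)) + 1 ≤ (N:ℚ) := by exact_mod_cast Nat.succ_le_of_lt hk
  have hMk : 2 * (k:ℚ) + 2 ≤ M := by simp only [hMdef]; linarith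
  have hpij : M ^ i ≤ M ^ j := pow_le_pow_right₀ hM1 hij.le
  have hpjk : M ^ j * M ≤ M ^ k := by
    rw [← pow_succ]
    exact pow_le_pow_right₀ hM1 (Nat.succ_le_of_lt hjk)
  have hpj : (0:ℚ) < M ^ j := by positivity
  have hpi : (0:ℚ) < M ^ i := by positivity
  have hci : (0:ℚ) ≤ (i:ℚ) := Nat.cast_nonneg i
  have hcij : (i:ℚ) + 1 ≤ (j:ℚ) := by exact_mod_cast Nat.succ_le_of_lt hij
  have hcjk : (j:ℚ) + 1 ≤ (k:ℚ) := by exact_mod_cast Nat.succ_le_of_lt hjk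
  have ha' := abs_le.1 ha
  have hb' := abs_le.1 hb
  constructor
  · have e1 : b - a ≤ 2 * M ^ j := by linarith
    have e2 : (0:ℚ) ≤ (k:ℚ) - (i:ℚ) := by linarith
    have e3 : (b - a) * ((k:ℚ) - (i:ℚ)) ≤ 2 * M ^ j * ((k:ℚ) - (i:ℚ)) :=
      mul_le_mul_of_nonneg_right e1 e2
    have h24 : 2 * ((k:ℚ) - (i:ℚ)) < M - 1 := by linarith
    have e4 : M ^ j * (2 * ((k:ℚ) - (i:ℚ))) < M ^ j * (M - 1) :=
      mul_lt_mul_of_pos_left h24 hpj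
    have e5 : M ^ j * M - M ^ j ≤ M ^ k - a := by linarith
    have hpos : (0:ℚ) ≤ M ^ k - a := by nlinarith [hpj, hM1]
    have e6 : (M ^ k - a) * 1 ≤ (M ^ k - a) * ((j:ℚ) - (i:ℚ)) :=
      mul_le_mul_of_nonneg_left (by linarith) hpos
    have er1 : 2 * M ^ j * ((k:ℚ) - (i:ℚ)) = M ^ j * (2 * ((k:ℚ) - (i:ℚ))) := by ring
    have er2 : M ^ j * (M - 1) = M ^ j * M - M ^ j := by ring
    have er3 : (M ^ k - a) * 1 = M ^ k - a := by ring
    linarith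
  · have f1 : b * ((k:ℚ) - (i:ℚ)) ≤ M ^ j * ((k:ℚ) - (i:ℚ)) :=
      mul_le_mul_of_nonneg_right hb'.2 (by linarith)
    have f2 : -(M ^ j) * ((k:ℚ) - (j:ℚ)) ≤ a * ((k:ℚ) - (j:ℚ)) :=
      mul_le_mul_of_nonneg_right (by linarith) (by linarith)
    have f3 : M ^ k ≤ M ^ k * ((j:ℚ) - (i:ℚ)) :=
      le_mul_of_one_le_right (by positivity) (by linarith)
    have f4 : M ^ j * (2 * (k:ℚ)) ≤ M ^ j * (M - 2) :=
      mul_le_mul_of_nonneg_left (by linarith) hpj.le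
    have f6 : M ^ j * ((k:ℚ) - (i:ℚ)) + M ^ j * ((k:ℚ) - (j:ℚ)) ≤ M ^ j * (2 * (k:ℚ)) := by
      have hsum : ((k:ℚ) - (i:ℚ)) + ((k:ℚ) - (j:ℚ)) ≤ 2 * (k:ℚ) := by
        have : (0:ℚ) ≤ (j:ℚ) := Nat.cast_nonneg j
        linarith
      nlinarith [hpj]
    nlinarith [f1, f2, f3, f4, f6, hpjk, hpj]

end Keys
section KeyCompare
variable {n : ℕ}

lemma key_lt_one (A : Set (Equiv.Perm (Fin n))) {i j k : Fin n} (hij : i < j) (hjk : j < k)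
    (hE : eps A k = 1) : key A i j < key A i k ∧ key A i k < key A j k := by
  have hij' : (i:ℕ) < (j:ℕ) := hij
  have hjk' : (j:ℕ) < (k:ℕ) := hjk
  have hkn : (k:ℕ) < n := k.isLt
  have hyk : yy A k = (2 * (n:ℚ) + 2) ^ (k:ℕ) := by rw [yy, hE, one_mul]
  obtain ⟨hc1, hc2⟩ := core hij' hjk' hkn (abs_yy A i) (abs_yy A j)
  have dij : (0:ℚ) < ((j:ℕ):ℚ) - ((i:ℕ):ℚ) := sub_pos.2 (by exact_mod_cast hij')
  have dik : (0:ℚ) < ((k:ℕ):ℚ) - ((i:ℕ):ℚ) := sub_pos.2 (by exact_mod_cast hij'.trans hjk')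
  have djk : (0:ℚ) < ((k:ℕ):ℚ) - ((j:ℕ):ℚ) := sub_pos.2 (by exact_mod_cast hjk')
  constructor
  · rw [key, key, div_lt_div_iff₀ dij dik, hyk]
    exact hc1
  · rw [key, key, div_lt_div_iff₀ dik djk, hyk]
    exact hc2

lemma key_lt_negone (A : Set (Equiv.Perm (Fin n))) {i j k : Fin n} (hij : i < j) (hjk : j < k)
    (hE : eps A k = -1) : key A j k < key A i k ∧ key A i k < key A i j := by
  have hij' : (i:ℕ) < (j:ℕ) := hij
  have hjk' : (j:ℕ) < (k:ℕ) := hjk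
  have hkn : (k:ℕ) < n := k.isLt
  have hyk : yy A k = -((2 * (n:ℚ) + 2) ^ (k:ℕ)) := by rw [yy, hE]; ring
  have hai : |(-(yy A i))| ≤ (2 * (n:ℚ) + 2) ^ (i:ℕ) := by
    rw [abs_neg]; exact abs_yy A i
  have haj : |(-(yy A j))| ≤ (2 * (n:ℚ) + 2) ^ (j:ℕ) := by
    rw [abs_neg]; exact abs_yy A j
  obtain ⟨hc1, hc2⟩ := core hij' hjk' hkn hai haj
  have dij : (0:ℚ) < ((j:ℕ):ℚ) - ((i:ℕ):ℚ) := sub_pos.2 (by exact_mod_cast hij')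
  have dik : (0:ℚ) < ((k:ℕ):ℚ) - ((i:ℕ):ℚ) := sub_pos.2 (by exact_mod_cast hij'.trans hjk')
  have djk : (0:ℚ) < ((k:ℕ):ℚ) - ((j:ℕ):ℚ) := sub_pos.2 (by exact_mod_cast hjk')
  constructor
  · rw [key, key, div_lt_div_iff₀ djk dik, hyk]
    nlinarith [hc2]
  · rw [key, key, div_lt_div_iff₀ dik dij, hyk]
    nlinarith [hc1]

lemma swap_inj {a b c d : Fin n} (hab : a < b) (hcd : c < d)
    (h : Equiv.swap a b = Equiv.swap c d) : a = c ∧ b = d := by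
  have h1 : Equiv.swap c d a = b := by rw [← h, Equiv.swap_apply_left]
  rcases eq_or_ne a c with rfl | hac
  · rw [Equiv.swap_apply_left] at h1
    exact ⟨rfl, h1.symm⟩
  rcases eq_or_ne a d with rfl | had
  · rw [Equiv.swap_apply_right] at h1
    exact absurd (hcd.trans hab) (h1 ▸ lt_irrefl b)
  · rw [Equiv.swap_apply_of_ne_of_ne hac had] at h1
    exact absurd h1 hab.ne

end KeyCompare
/-- existence of a compatible order. -/
theorem exists_compatible_order (n : ℕ) (A : Set (Equiv.Perm (Fin n)))
    (hA : admissible A) :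
    ∃ r : Equiv.Perm (Fin n) → Equiv.Perm (Fin n) → Prop,
      strictTotalOn {τ | τ ∈ A ∧ isTransposition τ} r ∧ compatibleOrder A r := by
  classical
  set r : Equiv.Perm (Fin n) → Equiv.Perm (Fin n) → Prop := fun τ σ =>
    ∃ a b c d : Fin n, a < b ∧ c < d ∧ τ = Equiv.swap a b ∧ σ = Equiv.swap c d ∧
      (key A a b < key A c d ∨
        (key A a b = key A c d ∧ ((a:ℕ) < (c:ℕ) ∨ (a = c ∧ (b:ℕ) < (d:ℕ))))) with hr
  refine ⟨r, ⟨?_, ?_, ?_⟩, ?_, ?_, ?_⟩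
  · -- irreflexivity
    rintro x - ⟨a, b, c, d, hab, hcd, rfl, hxcd, hlex⟩
    obtain ⟨rfl, rfl⟩ := swap_inj hab hcd hxcd
    rcases hlex with h | ⟨-, h | ⟨-, h⟩⟩
    · exact lt_irrefl _ h
    · exact lt_irrefl _ h
    · exact lt_irrefl _ h
  · -- transitivity
    rintro x - y - z - ⟨a, b, c, d, hab, hcd, rfl, rfl, h1⟩
      ⟨c', d', e, f, hcd', hef, hy, rfl, h2⟩
    obtain ⟨rfl, rfl⟩ := swap_inj hcd' hcd hy.symm
    refine ⟨a, b, e, f, hab, hef, rfl, rfl, ?_⟩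
    rcases h1 with h1 | ⟨he1, h1⟩
    · rcases h2 with h2 | ⟨he2, h2⟩
      · exact Or.inl (h1.trans h2)
      · exact Or.inl (he2 ▸ h1)
    · rcases h2 with h2 | ⟨he2, h2⟩
      · exact Or.inl (he1 ▸ h2)
      · refine Or.inr ⟨he1.trans he2, ?_⟩
        rcases h1 with h1 | ⟨rfl, h1⟩
        · rcases h2 with h2 | ⟨rfl, h2⟩
          · exact Or.inl (h1.trans h2)
          · exact Or.inl h1
        · rcases h2 with h2 | ⟨rfl, h2⟩
          · exact Or.inl h2
          · exact Or.inr ⟨rfl, h1.trans h2⟩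
  · -- totality
    rintro x ⟨-, a, b, hab, rfl⟩ y ⟨-, c, d, hcd, rfl⟩ hne
    rcases lt_trichotomy (key A a b) (key A c d) with h | h | h
    · exact Or.inl ⟨a, b, c, d, hab, hcd, rfl, rfl, Or.inl h⟩
    · rcases lt_trichotomy (a:ℕ) (c:ℕ) with h2 | h2 | h2
      · exact Or.inl ⟨a, b, c, d, hab, hcd, rfl, rfl, Or.inr ⟨h, Or.inl h2⟩⟩
      · have hac : a = c := Fin.ext h2
        rcases lt_trichotomy (b:ℕ) (d:ℕ) with h3 | h3 | h3
        · exact Or.inl ⟨a, b, c, d, hab, hcd, rfl, rfl, Or.inr ⟨h, Or.inr ⟨hac, h3⟩⟩⟩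
        · exact absurd (by rw [hac, Fin.ext h3]) hne
        · exact Or.inr ⟨c, d, a, b, hcd, hab, rfl, rfl,
            Or.inr ⟨h.symm, Or.inr ⟨hac.symm, h3⟩⟩⟩
      · exact Or.inr ⟨c, d, a, b, hcd, hab, rfl, rfl, Or.inr ⟨h.symm, Or.inl h2⟩⟩
    · exact Or.inr ⟨c, d, a, b, hcd, hab, rfl, rfl, Or.inl h⟩
  · -- compat 1 : R only
    intro i j k hij hjk hR hnL
    have hTik : Equiv.swap i k ∉ A := fun hT =>
      hnL (hA.2.1 _ hT _ (inC23_Lc hij hjk) (F3b hij hjk))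
    have hE : eps A k = 1 := eps_one ⟨i, j, hij, hjk, hR, hTik⟩
    obtain ⟨k1, k2⟩ := key_lt_one A hij hjk hE
    exact ⟨i, j, j, k, hij, hjk, rfl, rfl, Or.inl (k1.trans k2)⟩
  · -- compat 2 : L only
    intro i j k hij hjk hL hnR
    have hTik : Equiv.swap i k ∉ A := fun hT =>
      hnR (hA.2.1 _ hT _ (inC23_Rc hij hjk) (F3a hij hjk))
    have hE : eps A k = -1 := by
      apply eps_negone
      rintro ⟨i', j', hi'j', hj'k, hR', hnT'⟩
      exact star hA hij hjk hi'j' hj'k hR' hnT' hL hTik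
    obtain ⟨k1, k2⟩ := key_lt_negone A hij hjk hE
    exact ⟨j, k, i, j, hjk, hij, rfl, rfl, Or.inl (k1.trans k2)⟩
  · -- compat 3 : betweenness
    intro i j k hij hjk _
    by_cases hE : ∃ i' j' : Fin n, i' < j' ∧ j' < k ∧ Rc i' j' k ∈ A ∧ Equiv.swap i' k ∉ A
    · obtain ⟨k1, k2⟩ := key_lt_one A hij hjk (eps_one hE)
      exact Or.inl ⟨⟨i, j, i, k, hij, hij.trans hjk, rfl, rfl, Or.inl k1⟩,
        ⟨i, k, j, k, hij.trans hjk, hjk, rfl, rfl, Or.inl k2⟩⟩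
    · obtain ⟨k1, k2⟩ := key_lt_negone A hij hjk (eps_negone hE)
      exact Or.inr ⟨⟨j, k, i, k, hjk, hij.trans hjk, rfl, rfl, Or.inl k1⟩,
        ⟨i, k, i, j, hij.trans hjk, hij, rfl, rfl, Or.inl k2⟩⟩

end SmoothPerm
end

section
/- Let A ⊆ C^{2,3} be admissible, ≺ a compatible order for A, and suppose r_1 < r_2 < s_2 and s_1 > r_1 are such that T_{r_1,s_1}, T_{r_1,s_2} ∈ A, T_{r_1,s_2} covers T_{r_1,s_1} in ≺, and T_{r_2,s_2} covers T_{r_1,s_2} in ≺. Then s_1 = r_2. -/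
namespace SmoothPerm

variable {n : ℕ}

private lemma filter_swap_eq (i j a b : Fin n) (hab : a ≠ b)
    (h1 : (a ≤ i ∧ b ≤ j) ↔ (a ≤ i ∧ a ≤ j))
    (h2 : (b ≤ i ∧ a ≤ j) ↔ (b ≤ i ∧ b ≤ j)) :
    (Finset.univ.filter (fun x => x ≤ i ∧ Equiv.swap a b x ≤ j)) =
      Finset.univ.filter (fun x : Fin n => x ≤ i ∧ x ≤ j) := by
  ext x
  simp only [Finset.mem_filter, Finset.mem_univ, true_and]
  rcases eq_or_ne x a with rfl | hxa
  · rw [Equiv.swap_apply_left]; exact h1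
  rcases eq_or_ne x b with rfl | hxb
  · rw [Equiv.swap_apply_right]; exact h2
  · rw [Equiv.swap_apply_of_ne_of_ne hxa hxb]

private lemma card_swap_filter (i j a b : Fin n) (hab : a < b) :
    (Finset.univ.filter (fun x => x ≤ i ∧ Equiv.swap a b x ≤ j)).card =
      if a ≤ i ∧ a ≤ j ∧ i < b ∧ j < b
      then (Finset.univ.filter (fun x : Fin n => x ≤ i ∧ x ≤ j)).card - 1
      else (Finset.univ.filter (fun x : Fin n => x ≤ i ∧ x ≤ j)).card := by
  have hne : a ≠ b := ne_of_lt hab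
  split_ifs with h
  · have ha : a ∈ Finset.univ.filter (fun x : Fin n => x ≤ i ∧ x ≤ j) := by
      simp [h.1, h.2.1]
    rw [← Finset.card_erase_of_mem ha]
    congr 1
    ext x
    simp only [Finset.mem_filter, Finset.mem_univ, true_and, Finset.mem_erase]
    rcases eq_or_ne x a with rfl | hxa
    · rw [Equiv.swap_apply_left]
      constructor
      · rintro ⟨-, hbj⟩; exact absurd hbj (by omega)
      · rintro ⟨hxx, -⟩; exact absurd rfl hxx
    rcases eq_or_ne x b with rfl | hxb
    · rw [Equiv.swap_apply_right]
      constructor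
      · rintro ⟨hbi, -⟩; exact absurd hbi (by omega)
      · rintro ⟨-, hbi, -⟩; exact absurd hbi (by omega)
    · rw [Equiv.swap_apply_of_ne_of_ne hxa hxb]; tauto
  · by_cases hai : a ≤ i
    · by_cases haj : a ≤ j
      · by_cases hbi : b ≤ i
        · by_cases hbj : b ≤ j
          · rw [filter_swap_eq i j a b hne (by omega) (by omega)]
          · -- a ≤ i, a ≤ j, b ≤ i, j < b : S = insert b (T.erase a)
            have ha : a ∈ Finset.univ.filter (fun x : Fin n => x ≤ i ∧ x ≤ j) := by
              simp [hai, haj]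
            have hset : (Finset.univ.filter (fun x => x ≤ i ∧ Equiv.swap a b x ≤ j)) =
                insert b ((Finset.univ.filter (fun x : Fin n => x ≤ i ∧ x ≤ j)).erase a) := by
              ext x
              simp only [Finset.mem_filter, Finset.mem_univ, true_and, Finset.mem_insert,
                Finset.mem_erase]
              rcases eq_or_ne x a with rfl | hxa
              · rw [Equiv.swap_apply_left]
                constructor
                · rintro ⟨-, hbj'⟩; exact absurd hbj' hbj
                · rintro (h' | ⟨hxx, -⟩)
                  · exact absurd h' hne
                  · exact absurd rfl hxx
              rcases eq_or_ne x b with rfl | hxb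
              · rw [Equiv.swap_apply_right]
                constructor
                · intro _; exact Or.inl rfl
                · intro _; exact ⟨hbi, haj⟩
              · rw [Equiv.swap_apply_of_ne_of_ne hxa hxb]; tauto
            rw [hset, Finset.card_insert_of_notMem (by
              simp only [Finset.mem_erase, Finset.mem_filter, Finset.mem_univ, true_and]
              rintro ⟨-, -, hbj'⟩; exact hbj hbj'),
              Finset.card_erase_of_mem ha]
            have : 1 ≤ (Finset.univ.filter (fun x : Fin n => x ≤ i ∧ x ≤ j)).card :=
              Finset.card_pos.2 ⟨a, ha⟩
            omega
        · by_cases hbj : b ≤ j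
          · rw [filter_swap_eq i j a b hne (by omega) (by omega)]
          · exact absurd ⟨hai, haj, by omega, by omega⟩ h
      · rw [filter_swap_eq i j a b hne (by omega) (by omega)]
    · rw [filter_swap_eq i j a b hne (by omega) (by omega)]

private lemma bruhat_swap_swap {a b c d : Fin n} (hca : c ≤ a) (hab : a < b) (hbd : b ≤ d) :
    bruhatLE (Equiv.swap a b) (Equiv.swap c d) := by
  intro i j
  have hcd : c < d := lt_of_le_of_lt hca (lt_of_lt_of_le hab hbd)
  rw [card_swap_filter i j a b hab, card_swap_filter i j c d hcd]
  by_cases hab' : a ≤ i ∧ a ≤ j ∧ i < b ∧ j < b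
  · have hcd' : c ≤ i ∧ c ≤ j ∧ i < d ∧ j < d :=
      ⟨hca.trans hab'.1, hca.trans hab'.2.1, hab'.2.2.1.trans_le hbd, hab'.2.2.2.trans_le hbd⟩
    simp [hab', hcd']
  · simp only [if_neg hab']
    split_ifs <;> omega

private lemma swap_in_A {A : Set (Equiv.Perm (Fin n))} (hA : admissible A)
    {a b c d : Fin n} (hca : c ≤ a) (hab : a < b) (hbd : b ≤ d)
    (hm : Equiv.swap c d ∈ A) : Equiv.swap a b ∈ A :=
  hA.2.1 _ hm _ (Or.inl ⟨a, b, hab, rfl⟩) (bruhat_swap_swap hca hab hbd)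

theorem cover_lemma (n : ℕ) (A : Set (Equiv.Perm (Fin n))) (hA : admissible A)
    (r : Equiv.Perm (Fin n) → Equiv.Perm (Fin n) → Prop)
    (hst : strictTotalOn {τ | τ ∈ A ∧ isTransposition τ} r)
    (hc : compatibleOrder A r)
    (r1 r2 s1 s2 : Fin n) (h12 : r1 < r2) (h2s : r2 < s2) (hs1 : r1 < s1)
    (hm1 : Equiv.swap r1 s1 ∈ A) (hm2 : Equiv.swap r1 s2 ∈ A)
    (hc1 : coversIn {τ | τ ∈ A ∧ isTransposition τ} r (Equiv.swap r1 s1) (Equiv.swap r1 s2))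
    (hc2 : coversIn {τ | τ ∈ A ∧ isTransposition τ} r (Equiv.swap r1 s2) (Equiv.swap r2 s2)) :
    s1 = r2 := by
  obtain ⟨hirr, htrans, htot⟩ := hst
  obtain ⟨-, -, hcomp3⟩ := hc
  obtain ⟨hS1, hS2, hr12, hP1⟩ := hc1
  obtain ⟨-, hS3, hr23, hP2⟩ := hc2
  have asym : ∀ x ∈ {τ | τ ∈ A ∧ isTransposition τ}, ∀ y ∈ {τ | τ ∈ A ∧ isTransposition τ},
      r x y → r y x → False := fun x hx y hy h1 h2 => hirr x hx (htrans x hx y hy x hx h1 h2)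
  have h1s2 : r1 < s2 := h12.trans h2s
  have hmW : Equiv.swap r1 r2 ∈ A := swap_in_A hA le_rfl h12 h2s.le hm2
  have hWS : Equiv.swap r1 r2 ∈ {τ | τ ∈ A ∧ isTransposition τ} := ⟨hmW, r1, r2, h12, rfl⟩
  have hT3A : Equiv.swap r2 s2 ∈ A := hS3.1
  have F1 : r (Equiv.swap r1 r2) (Equiv.swap r1 s2) := by
    rcases hcomp3 r1 r2 s2 h12 h2s hm2 with ⟨h, -⟩ | ⟨h', -⟩
    · exact h
    · exact (asym _ hS2 _ hS3 hr23 h').elim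
  rcases lt_trichotomy s1 s2 with hlt | heq | hgt
  · -- Case A : s1 < s2
    have hmU : Equiv.swap s1 s2 ∈ A := swap_in_A hA hs1.le hlt le_rfl hm2
    have hUS : Equiv.swap s1 s2 ∈ {τ | τ ∈ A ∧ isTransposition τ} := ⟨hmU, s1, s2, hlt, rfl⟩
    have FU : r (Equiv.swap r1 s2) (Equiv.swap s1 s2) := by
      rcases hcomp3 r1 s1 s2 hs1 hlt hm2 with ⟨-, h⟩ | ⟨-, h⟩
      · exact h
      · exact (asym _ hS1 _ hS2 hr12 h).elim
    rcases lt_trichotomy s1 r2 with h1 | h2 | h3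
    · -- s1 < r2
      have hmV : Equiv.swap s1 r2 ∈ A := swap_in_A hA hs1.le h1 le_rfl hmW
      have hVS : Equiv.swap s1 r2 ∈ {τ | τ ∈ A ∧ isTransposition τ} := ⟨hmV, s1, r2, h1, rfl⟩
      have hTU : r (Equiv.swap r2 s2) (Equiv.swap s1 s2) ∧
          r (Equiv.swap s1 s2) (Equiv.swap s1 r2) := by
        rcases hcomp3 s1 r2 s2 h1 h2s hmU with ⟨-, h⟩ | h'
        · exact (hP2 _ hUS ⟨FU, h⟩).elim
        · exact h'
      have hVW : r (Equiv.swap s1 r2) (Equiv.swap r1 r2) ∧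
          r (Equiv.swap r1 r2) (Equiv.swap r1 s1) := by
        rcases hcomp3 r1 s1 r2 hs1 h1 hmW with ⟨h, -⟩ | h'
        · exact (hP1 _ hWS ⟨h, F1⟩).elim
        · exact h'
      -- cycle T1 → T2 → T3 → U → V → W → T1
      have c1 : r (Equiv.swap r1 s1) (Equiv.swap r2 s2) := htrans _ hS1 _ hS2 _ hS3 hr12 hr23
      have c2 : r (Equiv.swap r1 s1) (Equiv.swap s1 s2) := htrans _ hS1 _ hS3 _ hUS c1 hTU.1
      have c3 : r (Equiv.swap r1 s1) (Equiv.swap s1 r2) := htrans _ hS1 _ hUS _ hVS c2 hTU.2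
      have c4 : r (Equiv.swap r1 s1) (Equiv.swap r1 r2) := htrans _ hS1 _ hVS _ hWS c3 hVW.1
      have c5 : r (Equiv.swap r1 s1) (Equiv.swap r1 s1) := htrans _ hS1 _ hWS _ hS1 c4 hVW.2
      exact (hirr _ hS1 c5).elim
    · exact h2
    · -- r2 < s1
      have hmV : Equiv.swap r2 s1 ∈ A := swap_in_A hA h12.le h3 le_rfl hm1
      have hVS : Equiv.swap r2 s1 ∈ {τ | τ ∈ A ∧ isTransposition τ} := ⟨hmV, r2, s1, h3, rfl⟩
      have FV : r (Equiv.swap r2 s1) (Equiv.swap r2 s2) := by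
        rcases hcomp3 r2 s1 s2 h3 hlt hT3A with ⟨h, -⟩ | ⟨h', -⟩
        · exact h
        · exact (hP2 _ hUS ⟨FU, h'⟩).elim
      have FTV : r (Equiv.swap r1 s1) (Equiv.swap r2 s1) := by
        rcases hcomp3 r1 r2 s1 h12 h3 hm1 with ⟨-, h⟩ | ⟨-, h''⟩
        · exact h
        · exact (hP1 _ hWS ⟨h'', F1⟩).elim
      have hne : Equiv.swap r2 s1 ≠ Equiv.swap r1 s2 := by
        intro h
        have h1' : Equiv.swap r2 s1 r1 = Equiv.swap r1 s2 r1 := by rw [h]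
        rw [Equiv.swap_apply_of_ne_of_ne (by omega) (by omega), Equiv.swap_apply_left] at h1'
        omega
      rcases htot _ hVS _ hS2 hne with h | h
      · exact (hP1 _ hVS ⟨FTV, h⟩).elim
      · exact (hP2 _ hVS ⟨h, FV⟩).elim
  · -- s1 = s2 : impossible
    subst heq
    exact (hirr _ hS1 hr12).elim
  · -- Case B : s2 < s1
    have h2s1 : r2 < s1 := h2s.trans hgt
    have hmU : Equiv.swap s2 s1 ∈ A := swap_in_A hA h1s2.le hgt le_rfl hm1
    have hUS : Equiv.swap s2 s1 ∈ {τ | τ ∈ A ∧ isTransposition τ} := ⟨hmU, s2, s1, hgt, rfl⟩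
    have FU : r (Equiv.swap s2 s1) (Equiv.swap r1 s1) := by
      rcases hcomp3 r1 s2 s1 h1s2 hgt hm1 with ⟨h, -⟩ | ⟨h, -⟩
      · exact (asym _ hS1 _ hS2 hr12 h).elim
      · exact h
    have hmV : Equiv.swap r2 s1 ∈ A := swap_in_A hA h12.le h2s1 le_rfl hm1
    have hVS : Equiv.swap r2 s1 ∈ {τ | τ ∈ A ∧ isTransposition τ} := ⟨hmV, r2, s1, h2s1, rfl⟩
    have FV : r (Equiv.swap r2 s1) (Equiv.swap r2 s2) := by
      rcases hcomp3 r2 s2 s1 h2s hgt hmV with ⟨h3v, hvu⟩ | ⟨-, h⟩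
      · -- cycle T3 → V → U' → T1 → T2 → T3
        have c1 : r (Equiv.swap r2 s2) (Equiv.swap s2 s1) := htrans _ hS3 _ hVS _ hUS h3v hvu
        have c2 : r (Equiv.swap r2 s2) (Equiv.swap r1 s1) := htrans _ hS3 _ hUS _ hS1 c1 FU
        have c3 : r (Equiv.swap r2 s2) (Equiv.swap r1 s2) := htrans _ hS3 _ hS1 _ hS2 c2 hr12
        exact (asym _ hS2 _ hS3 hr23 c3).elim
      · exact h
    have FTV : r (Equiv.swap r1 s1) (Equiv.swap r2 s1) := by
      rcases hcomp3 r1 r2 s1 h12 h2s1 hm1 with ⟨-, h⟩ | ⟨-, h''⟩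
      · exact h
      · exact (hP1 _ hWS ⟨h'', F1⟩).elim
    have hne : Equiv.swap r2 s1 ≠ Equiv.swap r1 s2 := by
      intro h
      have h1' : Equiv.swap r2 s1 r1 = Equiv.swap r1 s2 r1 := by rw [h]
      rw [Equiv.swap_apply_of_ne_of_ne (by omega) (by omega), Equiv.swap_apply_left] at h1'
      omega
    rcases htot _ hVS _ hS2 hne with h | h
    · exact (hP1 _ hVS ⟨FTV, h⟩).elim
    · exact (hP2 _ hVS ⟨h, FV⟩).elim

end SmoothPerm
end

section
/- A permutation σ ∈ S_n is defined by inclusions (i.e., τ ≤ σ whenever max τ([i]) ≤ max σ([i]) and max τ^{-1}([i]) ≤ max σ^{-1}([i]) for all i) if and only if for every τ ∈ S_n, τ ≤ σ holds precisely when every cyclic-shift permutation R_{[i,j]} or L_{[i,j]} that is ≤ τ is also ≤ σ. -/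
namespace SmoothPerm

variable {n : ℕ}

/-! ### Auxiliary lemmas for Statement 12 -/

section Aux

def cnt (τ : Equiv.Perm (Fin n)) (a b : Fin n) : ℕ :=
  (Finset.univ.filter (fun x => x ≤ a ∧ τ x ≤ b)).card

lemma bruhatLE_def {τ σ : Equiv.Perm (Fin n)} :
    bruhatLE τ σ ↔ ∀ a b, cnt σ a b ≤ cnt τ a b := Iff.rfl

lemma bruhatLE_trans {ρ τ σ : Equiv.Perm (Fin n)}
    (h1 : bruhatLE ρ τ) (h2 : bruhatLE τ σ) : bruhatLE ρ σ :=
  fun a b => (h2 a b).trans (h1 a b)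

lemma cnt_inv (τ : Equiv.Perm (Fin n)) (a b : Fin n) : cnt τ⁻¹ b a = cnt τ a b := by
  unfold cnt
  apply Finset.card_nbij' (i := fun y => τ⁻¹ y) (j := fun x => τ x)
  · intro y hy
    simp only [Finset.mem_filter, Finset.mem_univ, true_and] at *
    simp only [Finset.mem_coe, Finset.mem_filter, Finset.mem_univ, true_and] at *
    exact ⟨hy.2, by simpa using hy.1⟩
  · intro x hx
    simp only [Finset.mem_filter, Finset.mem_univ, true_and] at *
    simp only [Finset.mem_coe, Finset.mem_filter, Finset.mem_univ, true_and] at *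
    exact ⟨hx.2, by simpa using hx.1⟩
  · intro y _; simp
  · intro x _; simp

lemma cnt_le_a (τ : Equiv.Perm (Fin n)) (a b : Fin n) : cnt τ a b ≤ (a : ℕ) + 1 := by
  have h : (Finset.univ.filter (fun x => x ≤ a ∧ τ x ≤ b)) ⊆ Finset.Iic a := by
    intro x hx; simp only [Finset.mem_filter] at hx; simp [hx.2.1]
  calc cnt τ a b ≤ (Finset.Iic a).card := Finset.card_le_card h
    _ = (a : ℕ) + 1 := Fin.card_Iic a

lemma cnt_le_b (τ : Equiv.Perm (Fin n)) (a b : Fin n) : cnt τ a b ≤ (b : ℕ) + 1 := by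
  rw [← cnt_inv]; exact cnt_le_a _ _ _

lemma le_cnt_a (τ : Equiv.Perm (Fin n)) {a b : Fin n}
    (h : ∀ x : Fin n, x ≤ a → τ x ≤ b) : (a : ℕ) + 1 ≤ cnt τ a b := by
  have hs : Finset.Iic a ⊆ (Finset.univ.filter (fun x => x ≤ a ∧ τ x ≤ b)) := by
    intro x hx; simp only [Finset.mem_Iic] at hx; simp [hx, h x hx]
  calc (a : ℕ) + 1 = (Finset.Iic a).card := (Fin.card_Iic a).symm
    _ ≤ cnt τ a b := Finset.card_le_card hs

lemma le_cnt_b (τ : Equiv.Perm (Fin n)) {a b : Fin n}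
    (h : ∀ y : Fin n, y ≤ b → τ⁻¹ y ≤ a) : (b : ℕ) + 1 ≤ cnt τ a b := by
  rw [← cnt_inv]; exact le_cnt_a _ h

lemma le_cnt_b_erase (τ : Equiv.Perm (Fin n)) {a b i0 : Fin n}
    (h : ∀ y : Fin n, y ≤ b → y ≠ i0 → τ⁻¹ y ≤ a) : (b : ℕ) ≤ cnt τ a b := by
  rw [← cnt_inv]
  have hs : (Finset.Iic b).erase i0 ⊆
      (Finset.univ.filter (fun y => y ≤ b ∧ τ⁻¹ y ≤ a)) := by
    intro y hy
    rw [Finset.mem_erase, Finset.mem_Iic] at hy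
    simp only [Finset.mem_filter, Finset.mem_univ, true_and]; exact ⟨hy.2, h y hy.2 hy.1⟩
  calc (b : ℕ) = (b : ℕ) + 1 - 1 := by omega
    _ = (Finset.Iic b).card - 1 := by rw [Fin.card_Iic]
    _ ≤ ((Finset.Iic b).erase i0).card := Finset.pred_card_le_card_erase
    _ ≤ _ := Finset.card_le_card hs

lemma cnt_le_b_miss (τ : Equiv.Perm (Fin n)) {a b y : Fin n}
    (hy : y ≤ b) (ha : ¬ τ⁻¹ y ≤ a) : cnt τ a b ≤ (b : ℕ) := by
  rw [← cnt_inv]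
  have hs : (Finset.univ.filter (fun z => z ≤ b ∧ τ⁻¹ z ≤ a)) ⊆
      (Finset.Iic b).erase y := by
    intro z hz
    simp only [Finset.mem_filter, Finset.mem_univ, true_and] at hz
    rw [Finset.mem_erase, Finset.mem_Iic]
    exact ⟨fun hzy => ha (hzy ▸ hz.2), hz.1⟩
  calc _ ≤ ((Finset.Iic b).erase y).card := Finset.card_le_card hs
    _ = (Finset.Iic b).card - 1 := Finset.card_erase_of_mem (by simpa using hy)
    _ = (b : ℕ) := by rw [Fin.card_Iic]; omega

lemma apply_le_maxS (σ : Equiv.Perm (Fin n)) {x i : Fin n} (h : x ≤ i) :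
    σ x ≤ maxS σ i :=
  Finset.le_max' _ _ (Finset.mem_image_of_mem _ (by simp [h]))

lemma exists_maxS (σ : Equiv.Perm (Fin n)) (i : Fin n) :
    ∃ x, x ≤ i ∧ σ x = maxS σ i := by
  have := Finset.max'_mem ((Finset.univ.filter (fun x => x ≤ i)).image (fun x => σ x))
    ⟨σ i, Finset.mem_image_of_mem _ (by simp)⟩
  rw [Finset.mem_image] at this
  obtain ⟨x, hx, hx2⟩ := this
  exact ⟨x, by simpa using hx, hx2⟩

lemma self_le_maxS (σ : Equiv.Perm (Fin n)) (i : Fin n) : i ≤ maxS σ i := by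
  by_contra h
  push_neg at h
  have hsub : (Finset.univ.filter (fun x : Fin n => x ≤ i)).image (fun x => σ x) ⊆
      Finset.Iic (maxS σ i) := by
    intro y hy; exact Finset.mem_Iic.mpr (Finset.le_max' _ y hy)
  have hcard : ((Finset.univ.filter (fun x : Fin n => x ≤ i)).image (fun x => σ x)).card
      = (i : ℕ) + 1 := by
    rw [Finset.card_image_of_injective _ σ.injective]
    have : (Finset.univ.filter (fun x : Fin n => x ≤ i)) = Finset.Iic i := by ext x; simp
    rw [this, Fin.card_Iic]
  have hle := Finset.card_le_card hsub
  rw [hcard, Fin.card_Iic] at hle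
  have : (i : ℕ) ≤ (maxS σ i : ℕ) := by omega
  exact absurd (Fin.le_def.mpr this) (not_le.mpr h)

/-- the explicit segment list -/
def segL (i j : Fin n) : List (Fin n) :=
  (List.range ((j : ℕ) - (i : ℕ) + 1)).pmap
    (fun k hk => (⟨(i : ℕ) + k, hk⟩ : Fin n))
    (fun k hk => by
      have h1 := List.mem_range.mp hk
      have h2 := j.isLt
      omega)

lemma segL_length (i j : Fin n) : (segL i j).length = (j : ℕ) - (i : ℕ) + 1 := by
  simp [segL]

lemma segL_get (i j : Fin n) (k : ℕ) (hk : k < (segL i j).length) :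
    ((segL i j)[k] : ℕ) = (i : ℕ) + k := by
  simp only [segL] at hk ⊢
  rw [List.getElem_pmap]
  simp

lemma mem_segL {i j : Fin n} (hij : (i : ℕ) ≤ (j : ℕ)) {x : Fin n} :
    x ∈ segL i j ↔ i ≤ x ∧ x ≤ j := by
  simp only [segL, List.mem_pmap, List.mem_range]
  rw [Fin.le_def, Fin.le_def]
  constructor
  · rintro ⟨k, hk, rfl⟩
    constructor <;> simp <;> omega
  · intro ⟨h1, h2⟩
    refine ⟨(x : ℕ) - (i : ℕ), by omega, ?_⟩
    apply Fin.ext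
    simp; omega

instance : IsAntisymm (Fin n) (· < ·) :=
  ⟨fun _ _ h h' => absurd h' (asymm h)⟩

lemma segL_sorted (i j : Fin n) : (segL i j).Pairwise (· < ·) := by
  apply List.Pairwise.pmap List.pairwise_lt_range
  intro a _ b _ hab
  rw [Fin.lt_def]
  simp; omega

lemma segL_nodup (i j : Fin n) : (segL i j).Nodup := (segL_sorted i j).imp ne_of_lt

lemma filter_eq_segL {i j : Fin n} (hij : (i : ℕ) ≤ (j : ℕ)) :
    ((List.finRange n).filter (fun x => decide (i ≤ x ∧ x ≤ j))) = segL i j := by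
  apply fun hp h1 h2 => List.Perm.eq_of_pairwise' (r := (· < · : Fin n → Fin n → Prop)) h1 h2 hp
  · apply (List.perm_ext_iff_of_nodup _ _).mpr
    · intro x
      rw [List.mem_filter, mem_segL hij]
      simp
    · exact (List.nodup_finRange n).filter _
    · exact segL_nodup i j
  · exact List.Pairwise.sublist List.filter_sublist (List.pairwise_lt_finRange n)
  · exact segL_sorted i j

lemma Rseg_eq_formPerm_segL {i j : Fin n} (hij : (i : ℕ) ≤ (j : ℕ)) :
    Rseg i j = (segL i j).formPerm := by
  rw [Rseg, filter_eq_segL hij]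

lemma Rseg_apply_not_mem {i j x : Fin n} (h : ¬ (i ≤ x ∧ x ≤ j)) :
    Rseg i j x = x := by
  rw [Rseg]
  apply List.formPerm_apply_of_notMem
  simp only [List.mem_filter, List.mem_finRange, true_and, decide_eq_true_eq]
  exact h

lemma Rseg_apply_mid {i j x : Fin n} (h1 : i ≤ x) (h2 : x < j) :
    (Rseg i j x : ℕ) = (x : ℕ) + 1 := by
  rw [Fin.le_def] at h1; rw [Fin.lt_def] at h2
  rw [Rseg_eq_formPerm_segL (by omega)]
  have hk : (x : ℕ) - (i : ℕ) < (segL i j).length := by rw [segL_length]; omega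
  have hx : (segL i j)[(x : ℕ) - (i : ℕ)] = x := by
    apply Fin.ext; rw [segL_get]; omega
  have hmod : ((x : ℕ) - (i : ℕ) + 1) % (segL i j).length = (x : ℕ) - (i : ℕ) + 1 := by
    apply Nat.mod_eq_of_lt; rw [segL_length]; omega
  rw [← hx, List.formPerm_apply_getElem _ (segL_nodup i j), segL_get]
  omega

lemma Rseg_apply_last {i j : Fin n} (hij : i ≤ j) : Rseg i j j = i := by
  rw [Fin.le_def] at hij
  rw [Rseg_eq_formPerm_segL hij]
  have hk : (j : ℕ) - (i : ℕ) < (segL i j).length := by rw [segL_length]; omega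
  have hx : (segL i j)[(j : ℕ) - (i : ℕ)] = j := by
    apply Fin.ext; rw [segL_get]; omega
  have hmod : ((j : ℕ) - (i : ℕ) + 1) % (segL i j).length = 0 := by
    rw [segL_length]; simp
  apply Fin.ext
  rw [show (segL i j).formPerm j
        = (segL i j).formPerm ((segL i j)[(j : ℕ) - (i : ℕ)]) from by rw [hx],
      List.formPerm_apply_getElem _ (segL_nodup i j), segL_get]
  omega

lemma Rseg_apply_le {i j : Fin n} (hij : i ≤ j) (x : Fin n) :
    (Rseg i j x : ℕ) ≤ (x : ℕ) + 1 := by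
  by_cases hm : i ≤ x ∧ x ≤ j
  · by_cases hlt : x < j
    · rw [Rseg_apply_mid hm.1 hlt]
    · have hxj : x = j := le_antisymm hm.2 (not_lt.mp hlt)
      subst hxj
      rw [Rseg_apply_last hij]
      rw [Fin.le_def] at hij; omega
  · rw [Rseg_apply_not_mem hm]; omega

lemma Rseg_inv_i {i j : Fin n} (hij : i ≤ j) : (Rseg i j)⁻¹ i = j := by
  rw [Equiv.Perm.inv_eq_iff_eq]
  exact (Rseg_apply_last hij).symm

lemma Rseg_inv_le {i j y : Fin n} (hy : y ≠ i) : ((Rseg i j)⁻¹ y : ℕ) ≤ (y : ℕ) := by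
  set x := (Rseg i j)⁻¹ y with hxdef
  have hxy : Rseg i j x = y := (Rseg i j).apply_symm_apply y
  by_cases hm : i ≤ x ∧ x ≤ j
  · by_cases hlt : x < j
    · have h := Rseg_apply_mid hm.1 hlt
      rw [hxy] at h
      omega
    · have hxj : x = j := le_antisymm hm.2 (not_lt.mp hlt)
      rw [hxj, Rseg_apply_last (hxj ▸ hm.1)] at hxy
      exact absurd hxy.symm hy
  · rw [Rseg_apply_not_mem hm] at hxy
    rw [hxy]

lemma bruhatLE_Rseg_iff {i j : Fin n} (hij : i < j) (τ : Equiv.Perm (Fin n)) :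
    bruhatLE (Rseg i j) τ ↔ (j : ℕ) ≤ (maxS τ⁻¹ i : ℕ) := by
  have hijℕ : (i : ℕ) < (j : ℕ) := hij
  constructor
  · intro h
    have hjn : (j : ℕ) < n := j.isLt
    set a : Fin n := ⟨(j : ℕ) - 1, by omega⟩ with ha
    have hcntR : cnt (Rseg i j) a i = (i : ℕ) := by
      have hset : (Finset.univ.filter (fun x => x ≤ a ∧ Rseg i j x ≤ i)) =
          Finset.Iio i := by
        ext x
        simp only [Finset.mem_filter, Finset.mem_univ, true_and, Finset.mem_Iio]
        constructor
        · rintro ⟨hxa, hxR⟩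
          by_contra hxi
          rw [not_lt] at hxi
          have hxj : x < j := by
            rw [Fin.lt_def]; rw [Fin.le_def] at hxa; simp [ha] at hxa; omega
          have := Rseg_apply_mid hxi hxj
          rw [Fin.le_def] at hxR hxi
          omega
        · intro hxi
          have hxiℕ : (x : ℕ) < (i : ℕ) := hxi
          refine ⟨by rw [Fin.le_def]; simp [ha]; omega, ?_⟩
          rw [Rseg_apply_not_mem (by rw [Fin.le_def]; push_neg; intro h'; omega)]
          exact hxi.le
      rw [cnt, hset, Fin.card_Iio]
    have hcntτ : cnt τ a i ≤ (i : ℕ) := hcntR ▸ (h a i)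
    by_contra hmax
    push_neg at hmax
    have hall : ∀ y : Fin n, y ≤ i → τ⁻¹ y ≤ a := by
      intro y hy
      have h1 := apply_le_maxS τ⁻¹ hy
      rw [Fin.le_def] at h1 ⊢
      simp only [ha]
      omega
    have := le_cnt_b τ hall
    omega
  · intro hmax
    obtain ⟨y, hyi, hyv⟩ := exists_maxS τ⁻¹ i
    have hyj : (j : ℕ) ≤ ((τ⁻¹ y : Fin n) : ℕ) := by rw [hyv]; exact hmax
    intro a b
    show cnt τ a b ≤ cnt (Rseg i j) a b
    rcases Nat.lt_or_ge (a : ℕ) (b : ℕ) with hab | hab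
    · calc cnt τ a b ≤ (a : ℕ) + 1 := cnt_le_a τ a b
        _ ≤ cnt (Rseg i j) a b := by
          apply le_cnt_a
          intro x hx
          rw [Fin.le_def] at hx ⊢
          have := Rseg_apply_le hij.le x
          omega
    · rcases Nat.lt_or_ge (b : ℕ) (i : ℕ) with hbi | hbi
      · calc cnt τ a b ≤ (b : ℕ) + 1 := cnt_le_b τ a b
          _ ≤ cnt (Rseg i j) a b := by
            apply le_cnt_b
            intro z hz
            rw [Fin.le_def] at hz ⊢
            have hzi : z ≠ i := by
              intro hzi; rw [hzi] at hz; omega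
            have := Rseg_inv_le (i := i) (j := j) hzi
            omega
      · rcases Nat.lt_or_ge (a : ℕ) (j : ℕ) with haj | haj
        · -- drop region
          calc cnt τ a b ≤ (b : ℕ) := by
                apply cnt_le_b_miss τ (y := y)
                · rw [Fin.le_def] at hyi ⊢; omega
                · rw [Fin.le_def]; push_neg; omega
            _ ≤ cnt (Rseg i j) a b := by
              apply le_cnt_b_erase (i0 := i)
              intro z hz hzi
              rw [Fin.le_def] at hz ⊢
              have := Rseg_inv_le (i := i) (j := j) hzi
              omega
        · calc cnt τ a b ≤ (b : ℕ) + 1 := cnt_le_b τ a b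
            _ ≤ cnt (Rseg i j) a b := by
              apply le_cnt_b
              intro z hz
              by_cases hzi : z = i
              · rw [hzi, Rseg_inv_i hij.le, Fin.le_def]; omega
              · have := Rseg_inv_le (i := i) (j := j) hzi
                rw [Fin.le_def] at hz ⊢
                omega

lemma bruhatLE_inv_iff (ρ τ : Equiv.Perm (Fin n)) :
    bruhatLE ρ⁻¹ τ ↔ bruhatLE ρ τ⁻¹ := by
  rw [bruhatLE_def, bruhatLE_def]
  constructor
  · intro h a b
    rw [cnt_inv τ b a, ← cnt_inv ρ a b]
    exact h b a
  · intro h a b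
    rw [← cnt_inv τ a b, cnt_inv ρ b a]
    exact h b a

lemma bruhatLE_RsegInv_iff {i j : Fin n} (hij : i < j) (τ : Equiv.Perm (Fin n)) :
    bruhatLE (Rseg i j)⁻¹ τ ↔ (j : ℕ) ≤ (maxS τ i : ℕ) := by
  rw [bruhatLE_inv_iff, bruhatLE_Rseg_iff hij, inv_inv]

lemma maxS_mono_iff (τ σ : Equiv.Perm (Fin n)) :
    (∀ i j : Fin n, i < j → ((j : ℕ) ≤ (maxS τ i : ℕ) → (j : ℕ) ≤ (maxS σ i : ℕ)))
      ↔ ∀ x, maxS τ x ≤ maxS σ x := by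
  constructor
  · intro h x
    rcases le_or_gt (maxS τ x) x with hle | hlt
    · exact hle.trans (self_le_maxS σ x)
    · exact Fin.le_def.mpr (h x (maxS τ x) hlt le_rfl)
  · intro h i j _ hj
    exact hj.trans (Fin.le_def.mp (h i))

end Aux

theorem definedByInclusions_iff_cyclic (n : ℕ) (σ : Equiv.Perm (Fin n)) :
    definedByInclusions σ ↔
      ∀ τ : Equiv.Perm (Fin n),
        (bruhatLE τ σ ↔ ∀ i j : Fin n, i < j →
          ((bruhatLE (Rseg i j) τ → bruhatLE (Rseg i j) σ) ∧
           (bruhatLE (Rseg i j)⁻¹ τ → bruhatLE (Rseg i j)⁻¹ σ))) := by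
  constructor
  · intro hdbi τ
    constructor
    · intro hts i j hij
      exact ⟨fun h => bruhatLE_trans h hts, fun h => bruhatLE_trans h hts⟩
    · intro h
      apply hdbi τ
      · apply (maxS_mono_iff τ σ).mp
        intro i j hij hle
        exact (bruhatLE_RsegInv_iff hij σ).mp
          ((h i j hij).2 ((bruhatLE_RsegInv_iff hij τ).mpr hle))
      · apply (maxS_mono_iff τ⁻¹ σ⁻¹).mp
        intro i j hij hle
        exact (bruhatLE_Rseg_iff hij σ).mp
          ((h i j hij).1 ((bruhatLE_Rseg_iff hij τ).mpr hle))
  · intro h τ h1 h2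
    apply (h τ).mpr
    intro i j hij
    refine ⟨fun hR => ?_, fun hL => ?_⟩
    · rw [bruhatLE_Rseg_iff hij] at hR ⊢
      exact hR.trans (Fin.le_def.mp (h2 i))
    · rw [bruhatLE_RsegInv_iff hij] at hL ⊢
      exact hL.trans (Fin.le_def.mp (h1 i))


end SmoothPerm
end
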